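/- Let A be an m×n real matrix, y ∈ ℝᵐ, and s ≤ n with (A^T y)_s ≠ 0. Then x̂ = (A^T y)_s / ‖(A^T y)_s‖₂ is a solution to argmax_x ⟨y, Ax⟩ subject to ‖x‖₀ ≤ s and ‖x‖₂ ≤ 1, where (A^T y)_s denotes the best s-term approximation of A^T y. -/

import Mathlib

open scoped RealInnerProductSpace

/-- Restriction of `v` to the index set `S` (zero outside `S`). -/
noncomputable def restr {n : ℕ} (v : EuclideanSpace ℝ (Fin n)) (S : Finset (Fin n)) :
    EuclideanSpace ℝ (Fin n) := WithLp.toLp 2 (fun i => if i ∈ S then v i else 0)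

lemma restr_norm_sq {n : ℕ} (v : EuclideanSpace ℝ (Fin n)) (S : Finset (Fin n)) :
    ‖restr v S‖ ^ 2 = ∑ i ∈ S, v i ^ 2 := by
  rw [← real_inner_self_eq_norm_sq, PiLp.inner_apply]
  simp only [RCLike.inner_apply, conj_trivial, restr]
  rw [← Finset.sum_subset (Finset.subset_univ S) (fun i _ hi => by simp [hi])]
  exact Finset.sum_congr rfl fun i hi => by simp [hi, sq]

/-- With `(Aᵀy)_s ≠ 0` the best `s`-term approximation of `Aᵀy` (restriction to a set
`S` of its `s` largest-magnitude entries), `x̂ = (Aᵀy)_s / ‖(Aᵀy)_s‖₂` solves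
`argmax ⟨y, Ax⟩` s.t. `‖x‖₀ ≤ s`, `‖x‖₂ ≤ 1`. -/
theorem stmt_5 {m n : ℕ} (A : Matrix (Fin m) (Fin n) ℝ) (y : Fin m → ℝ)
    (s : ℕ) (hs : s ≤ n)
    (z : EuclideanSpace ℝ (Fin n)) (hz : z = fun j => A.transpose.mulVec y j)
    (S : Finset (Fin n)) (hScard : S.card = s)
    (hSmax : ∀ i ∈ S, ∀ j ∉ S, |z j| ≤ |z i|)
    (zs xh : EuclideanSpace ℝ (Fin n)) (hzs : zs = restr z S) (hzsne : zs ≠ 0)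
    (hxh : xh = ‖zs‖⁻¹ • zs) :
    ‖xh‖ ≤ 1 ∧ (Finset.univ.filter fun j => xh j ≠ 0).card ≤ s ∧
    ∀ x : EuclideanSpace ℝ (Fin n),
      ‖x‖ ≤ 1 → (Finset.univ.filter fun j => x j ≠ 0).card ≤ s →
        (∑ i, y i * A.mulVec (fun j => x j) i) ≤ ∑ i, y i * A.mulVec (fun j => xh j) i := by
  have hzsnorm : 0 < ‖zs‖ := norm_pos_iff.mpr hzsne
  -- objective rewrite
  have hsum : ∀ x : EuclideanSpace ℝ (Fin n),
      (∑ i, y i * A.mulVec (fun j => x j) i) = ∑ j, z j * x j := by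
    intro x
    rw [hz]
    simp only [Matrix.mulVec, dotProduct, Matrix.transpose_apply,
      Finset.mul_sum, Finset.sum_mul]
    rw [Finset.sum_comm]
    exact Finset.sum_congr rfl fun j _ => Finset.sum_congr rfl fun i _ => by ring
  have hinner : ∀ x : EuclideanSpace ℝ (Fin n), (∑ j, z j * x j) = ⟪z, x⟫ := by
    intro x; rw [PiLp.inner_apply]; simp [RCLike.inner_apply, mul_comm]
  -- value at xh
  have hval : (∑ j, z j * xh j) = ‖zs‖ := by
    rw [hinner, hxh, inner_smul_right]
    have : ⟪z, zs⟫ = ‖zs‖ ^ 2 := by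
      rw [← real_inner_self_eq_norm_sq, PiLp.inner_apply, PiLp.inner_apply]
      refine Finset.sum_congr rfl fun i _ => ?_
      simp only [RCLike.inner_apply, conj_trivial, hzs, restr]
      by_cases h : i ∈ S <;> simp [h]
    rw [this]; field_simp
  -- norm of xh
  have hxhnorm : ‖xh‖ = 1 := by
    rw [hxh, norm_smul]
    simp [abs_of_pos (inv_pos.mpr hzsnorm), inv_mul_cancel₀ hzsnorm.ne']
  refine ⟨le_of_eq hxhnorm, ?_, ?_⟩
  · calc (Finset.univ.filter fun j => xh j ≠ 0).card ≤ S.card := by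
          apply Finset.card_le_card
          intro j hj
          simp only [Finset.mem_filter] at hj
          by_contra hjS
          apply hj.2
          rw [hxh, hzs]
          simp [restr, hjS]
        _ = s := hScard
  · intro x hx1 hxs
    rw [hsum, hsum, hval]
    set T := Finset.univ.filter fun j => x j ≠ 0 with hT
    have h1 : (∑ j, z j * x j) = ⟪restr z T, x⟫ := by
      rw [PiLp.inner_apply]
      refine Finset.sum_congr rfl fun j _ => ?_
      simp only [RCLike.inner_apply, conj_trivial, restr]
      by_cases h : j ∈ T
      · simp [h, mul_comm]
      · simp only [hT, Finset.mem_filter, Finset.mem_univ, true_and, not_not] at h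
        simp [h]
    rw [h1]
    have h2 : ⟪restr z T, x⟫ ≤ ‖restr z T‖ * ‖x‖ := real_inner_le_norm _ _
    have h3 : ‖restr z T‖ * ‖x‖ ≤ ‖restr z T‖ := by
      nlinarith [norm_nonneg (restr z T), norm_nonneg x]
    have h4 : ‖restr z T‖ ≤ ‖zs‖ := by
      have hsq : ‖restr z T‖ ^ 2 ≤ ‖zs‖ ^ 2 := by
        rw [hzs, restr_norm_sq, restr_norm_sq]
        have hsplitT : ∑ i ∈ T, z i ^ 2 = (∑ i ∈ T ∩ S, z i ^ 2) + ∑ i ∈ T \ S, z i ^ 2 :=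
          (Finset.sum_inter_add_sum_sdiff T S _).symm
        have hsplitS : ∑ i ∈ S, z i ^ 2 = (∑ i ∈ S ∩ T, z i ^ 2) + ∑ i ∈ S \ T, z i ^ 2 :=
          (Finset.sum_inter_add_sum_sdiff S T _).symm
        rw [hsplitT, hsplitS, Finset.inter_comm]
        gcongr ?_ + ?_
        · exact le_refl _
        · have hcard : (T \ S).card ≤ (S \ T).card := by
            have h5 : T.card ≤ S.card := hScard ▸ hxs
            have := Finset.card_inter_add_card_sdiff T S
            have := Finset.card_inter_add_card_sdiff S T
            have h6 : (T ∩ S).card = (S ∩ T).card := by rw [Finset.inter_comm]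
            omega
          rcases Finset.eq_empty_or_nonempty (T \ S) with he | hne
          · rw [he]
            simp only [Finset.sum_empty]
            exact Finset.sum_nonneg fun i _ => sq_nonneg _
          · have hneS : (S \ T).Nonempty := by
              rw [← Finset.card_pos] at hne ⊢; omega
            set c := (S \ T).inf' hneS (fun i => z i ^ 2) with hc
            have hc0 : 0 ≤ c := Finset.le_inf' hneS _ fun k _ => sq_nonneg _
            calc ∑ i ∈ T \ S, z i ^ 2 ≤ (T \ S).card • c := by
                  apply Finset.sum_le_card_nsmul
                  intro j hj
                  rw [Finset.mem_sdiff] at hj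
                  apply Finset.le_inf'
                  intro i hi
                  rw [Finset.mem_sdiff] at hi
                  have := hSmax i hi.1 j hj.2
                  nlinarith [abs_nonneg (z j), sq_abs (z i), sq_abs (z j)]
              _ ≤ (S \ T).card • c := by
                  simp only [nsmul_eq_mul]
                  apply mul_le_mul_of_nonneg_right _ hc0
                  exact_mod_cast hcard
              _ ≤ ∑ i ∈ S \ T, z i ^ 2 := Finset.card_nsmul_le_sum _ _ _
                  fun i hi => Finset.inf'_le _ hi
      nlinarith [norm_nonneg (restr z T), norm_nonneg zs]
    linarith
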